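/- Let C be a finite-dimensional comodule over the Hopf algebra of rooted trees H_R of dimension n+1 with n ≥ 1, and suppose C admits a complete flag of subcomodules with adapted basis (e_0,...,e_n), so that Δ_C(e_i) = Σ_{j=0}^{i} Q_{i,j} ⊗ e_j with Q_{i,j} ∈ H_R. Then coassociativity and counity force Q_{i,i} = 1 for all i, each Q_{i,i−1} is primitive, and Δ(Q_{i,j}) = Σ_{l=j}^{i} Q_{i,l} ⊗ Q_{l,j}. -/

import Mathlib

open scoped TensorProduct

/-- Let `C` be an `(n+1)`-dimensional comodule over the Hopf algebra of rooted trees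
`H` — here axiomatized as a bialgebra over `ℚ` whose only group-like element is `1` —
with a basis `(e_0, ..., e_n)` adapted to a complete flag of subcomodules, so that
`Δ_C(e_i) = Σ_{j ≤ i} Q_{i,j} ⊗ e_j`.  Then coassociativity and counity force
`Q_{i,i} = 1` for all `i`, `Δ(Q_{i,j}) = Σ_{l=j}^{i} Q_{i,l} ⊗ Q_{l,j}`, and each
`Q_{i,i−1}` is primitive. -/
theorem flag_comodule_structure_constants
    (H : Type*) [CommRing H] [Bialgebra ℚ H]
    -- the only group-like element of `H` is `1`
    (hgl : ∀ x : H, (Coalgebra.comul x : H ⊗[ℚ] H) = x ⊗ₜ[ℚ] x → x = 0 ∨ x = 1)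
    (n : ℕ) (hn : 1 ≤ n)
    (C : Type*) [AddCommGroup C] [Module ℚ C]
    (e : Module.Basis (Fin (n + 1)) ℚ C)
    (ρ : C →ₗ[ℚ] H ⊗[ℚ] C)
    (hcoassoc : ∀ x : C,
      (TensorProduct.assoc ℚ H H C)
          ((LinearMap.rTensor C (Coalgebra.comul (R := ℚ))) (ρ x))
        = (LinearMap.lTensor H ρ) (ρ x))
    (hcounit : ∀ x : C,
      (TensorProduct.lid ℚ C)
          ((LinearMap.rTensor C (Coalgebra.counit (R := ℚ))) (ρ x)) = x)
    (Q : Fin (n + 1) → Fin (n + 1) → H)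
    (hflag : ∀ i : Fin (n + 1), ρ (e i) = ∑ j ∈ Finset.Iic i, Q i j ⊗ₜ[ℚ] e j) :
    (∀ i : Fin (n + 1), Q i i = 1) ∧
    (∀ i j : Fin (n + 1), j ≤ i →
      (Coalgebra.comul (Q i j) : H ⊗[ℚ] H)
        = ∑ l ∈ Finset.Icc j i, Q i l ⊗ₜ[ℚ] Q l j) ∧
    (∀ i j : Fin (n + 1), (i : ℕ) = (j : ℕ) + 1 →
      (Coalgebra.comul (Q i j) : H ⊗[ℚ] H)
        = Q i j ⊗ₜ[ℚ] 1 + 1 ⊗ₜ[ℚ] Q i j) := by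
  classical
  set φ : Fin (n+1) → (H ⊗[ℚ] C →ₗ[ℚ] H) := fun l =>
    (TensorProduct.rid ℚ H).toLinearMap ∘ₗ LinearMap.lTensor H (e.coord l) with hφdef
  have hφe : ∀ (l j : Fin (n+1)) (h : H), φ l (h ⊗ₜ[ℚ] e j) = if j = l then h else 0 := by
    intro l j h
    simp only [hφdef, LinearMap.coe_comp, Function.comp_apply, LinearEquiv.coe_coe,
      LinearMap.lTensor_tmul, Module.Basis.coord_apply, Module.Basis.repr_self, Finsupp.single_apply,
      TensorProduct.rid_tmul]
    split <;> simp
  have haux : ∀ (l j : Fin (n+1)) (x : H ⊗[ℚ] H),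
      (LinearMap.lTensor H (φ l)) ((TensorProduct.assoc ℚ H H C) (x ⊗ₜ[ℚ] e j))
        = if j = l then x else 0 := by
    intro l j x
    induction x using TensorProduct.induction_on with
    | zero => simp
    | tmul a b =>
      rw [TensorProduct.assoc_tmul, LinearMap.lTensor_tmul, hφe]
      split <;> simp
    | add x y hx hy =>
      rw [TensorProduct.add_tmul, map_add, map_add, hx, hy]
      split <;> simp
  -- counit on diagonal
  have hcu : ∀ i : Fin (n+1), (Coalgebra.counit (R := ℚ) (Q i i) : ℚ) = 1 := by
    intro i
    have h := hcounit (e i)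
    rw [hflag i, map_sum, map_sum] at h
    simp only [LinearMap.rTensor_tmul, TensorProduct.lid_tmul] at h
    have h2 := congrArg (e.coord i) h
    rw [map_sum] at h2
    simp only [map_smul, Module.Basis.coord_apply, Module.Basis.repr_self, Finsupp.single_apply,
      smul_eq_mul, mul_ite, mul_one, mul_zero] at h2
    rwa [Finset.sum_ite_eq' _ i (fun j => Coalgebra.counit (R := ℚ) (Q i j)),
      if_pos (Finset.mem_Iic.mpr le_rfl)] at h2
  -- main comul formula
  have hmain : ∀ i l : Fin (n+1), l ≤ i →
      (Coalgebra.comul (Q i l) : H ⊗[ℚ] H) = ∑ j ∈ Finset.Icc l i, Q i j ⊗ₜ[ℚ] Q j l := by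
    intro i l hl
    have h := congrArg (LinearMap.lTensor H (φ l)) (hcoassoc (e i))
    rw [hflag i] at h
    simp only [map_sum, LinearMap.rTensor_tmul, haux, LinearMap.lTensor_tmul] at h
    rw [Finset.sum_ite_eq' _ l (fun j => (Coalgebra.comul (Q i j) : H ⊗[ℚ] H)),
      if_pos (Finset.mem_Iic.mpr hl)] at h
    have hr : ∀ j : Fin (n+1), φ l (ρ (e j)) = if l ≤ j then Q j l else 0 := by
      intro j
      rw [hflag j, map_sum]
      simp only [hφe]
      rw [Finset.sum_ite_eq' _ l (fun k => Q j k)]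
      simp [Finset.mem_Iic]
    simp only [hr] at h
    rw [h]
    have hset : Finset.Icc l i = (Finset.Iic i).filter (fun j => l ≤ j) := by
      ext k
      simp [Finset.mem_Icc, Finset.mem_Iic, and_comm]
    rw [hset, Finset.sum_filter]
    refine Finset.sum_congr rfl fun j _ => ?_
    split <;> simp
  -- diagonal is 1
  have hdiag : ∀ i : Fin (n+1), Q i i = 1 := by
    intro i
    have h := hmain i i le_rfl
    rw [Finset.Icc_self, Finset.sum_singleton] at h
    rcases hgl _ h with h0 | h1
    · exfalso
      have := hcu i
      rw [h0, map_zero] at this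
      exact zero_ne_one this
    · exact h1
  refine ⟨hdiag, fun i j hji => hmain i j hji, fun i j hij => ?_⟩
  have hji : j ≤ i := by rw [Fin.le_def]; omega
  have h := hmain i j hji
  have hset : Finset.Icc j i = {j, i} := by
    ext k
    simp only [Finset.mem_Icc, Finset.mem_insert, Finset.mem_singleton, Fin.le_def, Fin.ext_iff]
    omega
  have hne : j ≠ i := by
    intro hh
    rw [hh] at hij
    omega
  rw [hset, Finset.sum_pair hne, hdiag i, hdiag j] at h
  rw [h, add_comm]
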